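/- For T > 1/3 and for all k > 0, c(2k) > c(k) where c(k) = sqrt((1 + T k²)·tanh(k)/k); hence the factor i₃(k) = c(k)² − c(2k)² is strictly negative, so there is no second-harmonic resonance. -/

import Mathlib

open Real

/-- If `f` has derivative `f'` everywhere and `f' ≥ 0` on `[0,∞)`, then `f 0 ≤ f x` for `x ≥ 0`. -/
lemma mono_aux (f f' : ℝ → ℝ) (hd : ∀ x, HasDerivAt f (f' x) x)
    (h0 : ∀ x, 0 ≤ x → 0 ≤ f' x) : ∀ x, 0 ≤ x → f 0 ≤ f x := by
  intro x hx
  have hdf : Differentiable ℝ f := fun y => (hd y).differentiableAt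
  have hm : MonotoneOn f (Set.Ici (0:ℝ)) := by
    apply monotoneOn_of_deriv_nonneg (convex_Ici 0) hdf.continuous.continuousOn
      (hdf.differentiableOn)
    intro y hy
    rw [interior_Ici] at hy
    rw [(hd y).deriv]
    exact h0 y (le_of_lt hy)
  exact hm (Set.self_mem_Ici) hx hx

lemma sinh_le_mul_cosh {x : ℝ} (hx : 0 ≤ x) : Real.sinh x ≤ x * Real.cosh x := by
  have hd : ∀ y : ℝ, HasDerivAt (fun y => y * Real.cosh y - Real.sinh y)
      (y * Real.sinh y) y := by
    intro y
    have h1 := ((hasDerivAt_id y).mul (Real.hasDerivAt_cosh y)).sub (Real.hasDerivAt_sinh y)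
    refine h1.congr_deriv ?_; (try simp only [id_eq]); ring
  have := mono_aux _ _ hd (fun y hy => mul_nonneg hy ((by simpa using Real.sinh_le_sinh.mpr hy : (0:ℝ) ≤ Real.sinh y))) x hx
  simp at this
  linarith

lemma lemA {x : ℝ} (hx : 0 ≤ x) : (3 - x ^ 2) * Real.sinh x ≤ 3 * x := by
  -- h(x) = 3x - (3 - x²) sinh x ; h' = 3 + 2x sinh x - (3-x²) cosh x ; h'' = (x²-1) sinh x + 4x cosh x ≥ 0
  have hd' : ∀ y : ℝ, HasDerivAt (fun y => 3 + 2 * y * Real.sinh y - (3 - y ^ 2) * Real.cosh y)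
      ((y ^ 2 - 1) * Real.sinh y + 4 * y * Real.cosh y) y := by
    intro y
    have h1 := ((((hasDerivAt_id y).const_mul 2).mul (Real.hasDerivAt_sinh y)).const_add 3).sub
      ((((hasDerivAt_pow 2 y).const_sub 3)).mul (Real.hasDerivAt_cosh y))
    refine h1.congr_deriv ?_; (try simp only [id_eq]); ring
  have hprime : ∀ y : ℝ, 0 ≤ y → 0 ≤ 3 + 2 * y * Real.sinh y - (3 - y ^ 2) * Real.cosh y := by
    have key : ∀ y : ℝ, 0 ≤ y → 0 ≤ (y ^ 2 - 1) * Real.sinh y + 4 * y * Real.cosh y := by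
      intro y hy
      have h1 : Real.sinh y ≤ y * Real.cosh y := sinh_le_mul_cosh hy
      have h2 : 0 ≤ Real.sinh y := (by simpa using Real.sinh_le_sinh.mpr hy : (0:ℝ) ≤ Real.sinh y)
      have h3 : 0 < Real.cosh y := Real.cosh_pos y
      nlinarith [sq_nonneg y, mul_nonneg (mul_nonneg hy hy) h2]
    intro y hy
    have := mono_aux _ _ hd' key y hy
    simp at this
    linarith [this]
  have hd : ∀ y : ℝ, HasDerivAt (fun y => 3 * y - (3 - y ^ 2) * Real.sinh y)
      (3 + 2 * y * Real.sinh y - (3 - y ^ 2) * Real.cosh y) y := by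
    intro y
    have h1 := ((hasDerivAt_id y).const_mul 3).sub
      (((hasDerivAt_pow 2 y).const_sub 3).mul (Real.hasDerivAt_sinh y))
    refine h1.congr_deriv ?_; (try simp only [id_eq]); ring
  have := mono_aux _ _ hd hprime x hx
  simp at this
  linarith

noncomputable def cT (T k : ℝ) : ℝ := Real.sqrt ((1 + T * k ^ 2) * Real.tanh k / k)

theorem i3_neg_of_large_tension : ∀ T : ℝ, 1 / 3 < T → ∀ k : ℝ, 0 < k →
    cT T k < cT T (2 * k) ∧ cT T k ^ 2 - cT T (2 * k) ^ 2 < 0 := by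
  intro T hT k hk
  set s := Real.sinh k with hs
  set c := Real.cosh k with hc
  have hspos : 0 < s := Real.sinh_pos_iff.mpr hk
  have hcpos : 0 < c := Real.cosh_pos k
  have hsq : c ^ 2 = s ^ 2 + 1 := Real.cosh_sq k
  have hks : k ≤ s := Real.self_le_sinh_iff.mpr hk.le
  -- key inequality : 3 s² ≤ k² (2c² + 1)
  have hkey : 3 * s ^ 2 ≤ k ^ 2 * (2 * c ^ 2 + 1) := by
    have hA : (3 - k ^ 2) * s ≤ 3 * k := lemA hk.le
    -- s - k ≤ k²s/3  and  s² - k² = (s-k)(s+k) ≤ (s-k)·2s ≤ (2k²/3)s²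
    nlinarith [mul_nonneg (sub_nonneg.mpr hks) hspos.le, sq_nonneg (s - k)]
  -- the argument inequality
  have harg : (1 + T * k ^ 2) * Real.tanh k / k <
      (1 + T * (2 * k) ^ 2) * Real.tanh (2 * k) / (2 * k) := by
    rw [Real.tanh_eq_sinh_div_cosh, Real.tanh_eq_sinh_div_cosh, Real.sinh_two_mul,
      Real.cosh_two_mul]
    rw [div_lt_div_iff₀ hk (by linarith)]
    have hc2 : 0 < c ^ 2 + s ^ 2 := by positivity
    rw [show Real.sinh k = s from rfl, show Real.cosh k = c from rfl]
    rw [← mul_div_assoc, div_mul_eq_mul_div, ← mul_div_assoc, div_mul_eq_mul_div,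
      div_lt_div_iff₀ hcpos hc2]
    have h1 : s ^ 2 < T * k ^ 2 * (2 * c ^ 2 + 1) := by
      have : (1 / 3) * (k ^ 2 * (2 * c ^ 2 + 1)) < T * (k ^ 2 * (2 * c ^ 2 + 1)) := by
        apply mul_lt_mul_of_pos_right hT
        positivity
      nlinarith
    have hcs : c ^ 2 - s ^ 2 - 1 = 0 := by rw [hsq]; ring
    have hdiff : (1 + T * (2 * k) ^ 2) * (2 * s * c) * k * c
        - (1 + T * k ^ 2) * s * (2 * k) * (c ^ 2 + s ^ 2)
        = 2 * (k * (s * (T * k ^ 2 * (2 * c ^ 2 + 1) - s ^ 2)))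
          + 2 * k * s * (T * k ^ 2) * (c ^ 2 - s ^ 2 - 1) := by ring
    rw [hcs, mul_zero, add_zero] at hdiff
    nlinarith [mul_pos hk (mul_pos hspos (sub_pos.mpr h1))]
  have hnn : 0 ≤ (1 + T * k ^ 2) * Real.tanh k / k := by
    have ht : 0 ≤ Real.tanh k := by
      rw [Real.tanh_eq_sinh_div_cosh]; positivity
    have hT0 : 0 < T := lt_trans (by norm_num) hT
    positivity
  have hlt : cT T k < cT T (2 * k) := Real.sqrt_lt_sqrt hnn harg
  refine ⟨hlt, ?_⟩
  have h0 : 0 ≤ cT T k := Real.sqrt_nonneg _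
  nlinarith [hlt, h0]
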